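/- For all real m ≥ 4 and the recursion T(m) = 4(6m − 5 − ⌊(m−2)/3⌋) + T(m − ⌊(m−2)/3⌋) with T(4) ≤ 57, one has T(m) ≤ 120m. -/
import Mathlib


/-- For the recursion
`T m = 4 * (6m − 5 − ⌊(m−2)/3⌋) + T (m − ⌊(m−2)/3⌋)` (for `m ≥ 5`) with `T 4 ≤ 57`,
one has `T m ≤ 120 * m` for all `m ≥ 4`. -/
theorem recursion_linear_bound (T : ℕ → ℕ)
    (hbase : T 4 ≤ 57)
    (hrec : ∀ m, 5 ≤ m → T m = 4 * (6 * m - 5 - (m - 2) / 3) + T (m - (m - 2) / 3)) :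
    ∀ m, 4 ≤ m → T m ≤ 120 * m := by
  have e5 := hrec 5 (by omega); norm_num at e5
  have e6 := hrec 6 (by omega); norm_num at e6
  have e7 := hrec 7 (by omega); norm_num at e7
  have e8 := hrec 8 (by omega); norm_num at e8
  intro m
  induction m using Nat.strong_induction_on with
  | _ m ih =>
    intro hm
    rcases Nat.lt_or_ge m 9 with h | h
    · interval_cases m <;> omega
    · have e := hrec m (by omega)
      have ihm := ih (m - (m - 2) / 3) (by omega) (by omega)
      omega
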